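/- Let G be a block graph of order n that is not a complete graph. If ι(G) = n/3, then every end-block of G has at most three vertices. -/

import Mathlib

open SimpleGraph Set

/-- The closed neighborhood `N[D]` of a set of vertices. -/
def closedNbhd {V : Type*} (G : SimpleGraph V) (D : Set V) : Set V :=
  {w | w ∈ D ∨ ∃ v ∈ D, G.Adj v w}

/-- `D` is an isolating set: the vertices outside `N[D]` form an independent set. -/
def IsIsolating {V : Type*} (G : SimpleGraph V) (D : Set V) : Prop :=
  ∀ a b : V, a ∉ closedNbhd G D → b ∉ closedNbhd G D → ¬ G.Adj a b

/-- The isolation number: minimum cardinality of an isolating set. -/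
noncomputable def isolNum {V : Type*} (G : SimpleGraph V) : ℕ :=
  sInf {k | ∃ D : Set V, IsIsolating G D ∧ D.ncard = k}

/-- `v` is a cut vertex of `G`. -/
def IsCutVertex {V : Type*} (G : SimpleGraph V) (v : V) : Prop :=
  G.Connected ∧ ¬ (G.induce {w | w ≠ v}).Connected

/-- `B` is a block of `G`: a maximal connected set of vertices inducing a subgraph
without cut vertices. -/
def IsBlock {V : Type*} (G : SimpleGraph V) (B : Set V) : Prop :=
  (G.induce B).Connected ∧ (∀ v, ¬ IsCutVertex (G.induce B) v) ∧
    ∀ B' : Set V, B ⊆ B' → (G.induce B').Connected →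
      (∀ v, ¬ IsCutVertex (G.induce B') v) → B' = B

/-- A block graph: a connected graph all of whose blocks are complete. -/
def IsBlockGraph {V : Type*} (G : SimpleGraph V) : Prop :=
  G.Connected ∧ ∀ B : Set V, IsBlock G B → ∀ x ∈ B, ∀ y ∈ B, x ≠ y → G.Adj x y

/-- `v` is simplicial: its closed neighborhood induces a complete graph. -/
def Simplicial {V : Type*} (G : SimpleGraph V) (v : V) : Prop :=
  ∀ x ∈ G.neighborSet v, ∀ y ∈ G.neighborSet v, x ≠ y → G.Adj x y

/-- An end-block: a block containing at most one cut vertex of `G`. -/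
def IsEndBlock {V : Type*} (G : SimpleGraph V) (B : Set V) : Prop :=
  IsBlock G B ∧ {v ∈ B | IsCutVertex G v}.Subsingleton

section AuxDefs
variable {V : Type*}

/-- Adjacency restricted to a vertex set `W`. -/
def AdjIn (G : SimpleGraph V) (W : Set V) (x y : V) : Prop := x ∈ W ∧ y ∈ W ∧ G.Adj x y

/-- Reachability inside a vertex set `W`. -/
def ReachIn (G : SimpleGraph V) (W : Set V) : V → V → Prop := Relation.ReflTransGen (AdjIn G W)

/-- Connectivity of the subgraph induced on `W`, phrased on the ambient type. -/
def ConnIn (G : SimpleGraph V) (W : Set V) : Prop :=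
  W.Nonempty ∧ ∀ a ∈ W, ∀ b ∈ W, ReachIn G W a b

/-- `n`-step reachability inside `W`. -/
def ReachN (G : SimpleGraph V) (W : Set V) : ℕ → V → V → Prop
  | 0 => fun a b => a = b
  | (n+1) => fun a b => ∃ c, AdjIn G W a c ∧ ReachN G W n c b

/-- Distance inside `W`. -/
noncomputable def dIn (G : SimpleGraph V) (W : Set V) (a b : V) : ℕ :=
  sInf {n | ReachN G W n a b}

/-- Vertices separated from `r` by removal of `v` (the "descendants" of `v`). -/
def Desc (G : SimpleGraph V) (W : Set V) (r v : V) : Set V :=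
  {z | z ∈ W ∧ z ≠ v ∧ ¬ ReachIn G (W \ {v}) r z}

/-- `D` isolates within `W`. -/
def IsolIn (G : SimpleGraph V) (W D : Set V) : Prop :=
  ∀ a ∈ W, ∀ b ∈ W, a ∉ closedNbhd G D → b ∉ closedNbhd G D → ¬ G.Adj a b

end AuxDefs

section AuxLemmas
variable {V : Type*} {G : SimpleGraph V} {W W' : Set V} {a b c x y z v w : V}

lemma AdjIn.symm' (h : AdjIn G W x y) : AdjIn G W y x := ⟨h.2.1, h.1, h.2.2.symm⟩

lemma reachIn_mono (hW : W ⊆ W') (h : ReachIn G W a b) : ReachIn G W' a b :=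
  Relation.ReflTransGen.mono (fun _ _ hr => ⟨hW hr.1, hW hr.2.1, hr.2.2⟩) _ _ h

lemma reachIn_symm (h : ReachIn G W a b) : ReachIn G W b a :=
  haveI : Std.Symm (AdjIn G W) := ⟨fun _ _ hr => hr.symm'⟩
  Std.Symm.symm (r := Relation.ReflTransGen (AdjIn G W)) _ _ h

lemma reachIn_trans (h : ReachIn G W a b) (h' : ReachIn G W b c) : ReachIn G W a c :=
  Relation.ReflTransGen.trans h h'

lemma reachIn_single (h : AdjIn G W a b) : ReachIn G W a b :=
  Relation.ReflTransGen.single h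

lemma reachIn_mem (h : ReachIn G W a b) (ha : a ∈ W) : b ∈ W := by
  induction h with
  | refl => exact ha
  | tail _ hr _ => exact hr.2.1

lemma reachIn_ne_mem (h : ReachIn G W a b) (hab : a ≠ b) : a ∈ W ∧ b ∈ W := by
  rcases h.cases_head with h1 | ⟨u, hu, hr⟩
  · exact absurd h1 hab
  · exact ⟨hu.1, reachIn_mem hr hu.2.1⟩

lemma reachN_snoc {n : ℕ} (h : ReachN G W n a b) (h' : AdjIn G W b c) :
    ReachN G W (n+1) a c := by
  induction n generalizing a with
  | zero => cases h; exact ⟨c, h', rfl⟩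
  | succ n ih => obtain ⟨u, hu, hr⟩ := h; exact ⟨u, hu, ih hr⟩

lemma reachIn_iff_reachN : ReachIn G W a b ↔ ∃ n, ReachN G W n a b := by
  constructor
  · intro h
    induction h with
    | refl => exact ⟨0, rfl⟩
    | tail _ hr ih => obtain ⟨n, hn⟩ := ih; exact ⟨n+1, reachN_snoc hn hr⟩
  · rintro ⟨n, hn⟩
    induction n generalizing a with
    | zero => cases hn; exact Relation.ReflTransGen.refl
    | succ n ih =>
      obtain ⟨u, hu, hr⟩ := hn
      exact Relation.ReflTransGen.head hu (ih hr)

lemma reachN_dIn (h : ReachIn G W a b) : ReachN G W (dIn G W a b) a b :=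
  Nat.sInf_mem (reachIn_iff_reachN.mp h)

lemma dIn_le {n : ℕ} (h : ReachN G W n a b) : dIn G W a b ≤ n := Nat.sInf_le h

lemma reachN_append {m n : ℕ} (h : ReachN G W m a b) (h' : ReachN G W n b c) :
    ReachN G W (m+n) a c := by
  induction m generalizing a with
  | zero => cases h; simpa using h'
  | succ m ih =>
    obtain ⟨u, hu, hr⟩ := h
    have : m + 1 + n = (m + n) + 1 := by omega
    rw [this]
    exact ⟨u, hu, ih hr⟩

lemma dIn_self : dIn G W a a = 0 := Nat.le_zero.mp (dIn_le (by trivial))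

lemma reachN_zero (h : ReachN G W 0 a b) : a = b := h

lemma toChain {n : ℕ} (h : ReachN G W n a b) :
    ∃ f : ℕ → V, f 0 = a ∧ f n = b ∧ ∀ i < n, AdjIn G W (f i) (f (i+1)) := by
  induction n generalizing a with
  | zero => exact ⟨fun _ => a, rfl, h ▸ rfl, fun i hi => absurd hi (Nat.not_lt_zero i)⟩
  | succ n ih =>
    obtain ⟨u, hu, hr⟩ := h
    obtain ⟨g, hg0, hgn, hgs⟩ := ih hr
    refine ⟨fun i => if i = 0 then a else g (i-1), by simp, by simp [hgn], ?_⟩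
    intro i hi
    rcases Nat.eq_zero_or_pos i with h0 | h0
    · subst h0; simpa [hg0] using hu
    · have h1 : i ≠ 0 := h0.ne'
      have h2 : i + 1 ≠ 0 := by omega
      simp only [h1, h2, if_false]
      have : i - 1 + 1 = i + 1 - 1 := by omega
      rw [← this]
      exact hgs (i-1) (by omega)

lemma fromChain {n : ℕ} (f : ℕ → V) (hs : ∀ i < n, AdjIn G W (f i) (f (i+1))) :
    ReachN G W n (f 0) (f n) := by
  induction n with
  | zero => rfl
  | succ n ih =>
    exact reachN_snoc (ih (fun i hi => hs i (by omega))) (hs n (by omega))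

lemma fromChainOff {i n : ℕ} (f : ℕ → V) (hin : i ≤ n)
    (hs : ∀ j, i ≤ j → j < n → AdjIn G W (f j) (f (j+1))) :
    ReachN G W (n - i) (f i) (f n) := by
  have := fromChain (G := G) (W := W) (n := n - i) (fun j => f (i + j))
    (fun j hj => by
      show AdjIn G W (f (i + j)) (f (i + (j+1)))
      have : i + (j+1) = i + j + 1 := by omega
      rw [this]
      exact hs (i + j) (by omega) (by omega))
  simpa [Nat.add_sub_cancel' hin] using this

lemma chainReach {T : Set V} {n : ℕ} (f : ℕ → V) {i j : ℕ} (hij : i ≤ j) (hjn : j ≤ n)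
    (hs : ∀ k, i ≤ k → k < n → AdjIn G T (f k) (f (k+1))) :
    ReachIn G T (f i) (f j) := by
  have := fromChainOff (G := G) (W := T) (i := i) (n := j) f hij
    (fun k hk hk' => hs k hk (by omega))
  exact reachIn_iff_reachN.mpr ⟨j - i, this⟩

/-- A shortest chain: prefix distances are exact. -/
lemma shortestChain (h : ReachIn G W a b) :
    ∃ f : ℕ → V, f 0 = a ∧ f (dIn G W a b) = b ∧
      (∀ i < dIn G W a b, AdjIn G W (f i) (f (i+1))) ∧
      (∀ i ≤ dIn G W a b, dIn G W a (f i) = i) := by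
  set n := dIn G W a b with hn
  obtain ⟨f, hf0, hfn, hfs⟩ := toChain (reachN_dIn h)
  refine ⟨f, hf0, hfn, hfs, ?_⟩
  intro i hi
  have hle : dIn G W a (f i) ≤ i := by
    have := fromChain (G := G) (W := W) (n := i) f (fun j hj => hfs j (by omega))
    rw [hf0] at this
    exact dIn_le this
  rcases lt_or_eq_of_le hle with hlt | he
  · exfalso
    set k := dIn G W a (f i) with hk
    have hreach : ReachIn G W a (f i) := by
      have := fromChain (G := G) (W := W) (n := i) f (fun j hj => hfs j (by omega))
      rw [hf0] at this
      exact reachIn_iff_reachN.mpr ⟨i, this⟩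
    have h1 : ReachN G W k a (f i) := reachN_dIn hreach
    have h2 : ReachN G W (n - i) (f i) b := by
      have := fromChainOff (G := G) (W := W) (i := i) (n := n) f hi
        (fun j hj hj' => hfs j hj')
      rwa [hfn] at this
    have h3 : ReachN G W (k + (n - i)) a b := reachN_append h1 h2
    have := dIn_le h3
    omega
  · exact he

lemma dIn_pos_of_ne (h : ReachIn G W a b) (hab : a ≠ b) : 1 ≤ dIn G W a b := by
  by_contra hc
  push_neg at hc
  have h0 : dIn G W a b = 0 := by omega
  have := reachN_dIn h
  rw [h0] at this
  exact hab (reachN_zero this)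

end AuxLemmas

section Part2
variable {V : Type*} {G : SimpleGraph V} {W U S : Set V} {a b c r s x y z v : V}

lemma closedNbhd_mono {D D' : Set V} (h : D ⊆ D') : closedNbhd G D ⊆ closedNbhd G D' := by
  rintro w (hw | ⟨u, hu, hadj⟩)
  · exact Or.inl (h hw)
  · exact Or.inr ⟨u, h hu, hadj⟩

lemma mem_closedNbhd_self {D : Set V} (h : v ∈ D) : v ∈ closedNbhd G D := Or.inl h

lemma mem_closedNbhd_adj {D : Set V} (h : v ∈ D) (hadj : G.Adj v w) :
    w ∈ closedNbhd G D := Or.inr ⟨v, h, hadj⟩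

lemma desc_closure (hz : z ∈ Desc G W r v) (hw : w ∈ W) (hwv : w ≠ v)
    (hadj : G.Adj z w) : w ∈ Desc G W r v := by
  refine ⟨hw, hwv, fun hreach => hz.2.2 ?_⟩
  exact reachIn_trans hreach (reachIn_single ⟨⟨hw, hwv⟩, ⟨hz.1, hz.2.1⟩, hadj.symm⟩)

lemma not_mem_desc_self : v ∉ Desc G W r v := fun h => h.2.1 rfl

lemma desc_root_self (hr : r ∈ W) : r ∉ Desc G W r v :=
  fun h => h.2.2 Relation.ReflTransGen.refl

lemma desc_of_root : W \ {r} ⊆ Desc G W r r := by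
  rintro z ⟨hz, hzr⟩
  refine ⟨hz, hzr, fun hreach => ?_⟩
  rcases hreach.cases_head with h1 | ⟨u, hu, _⟩
  · exact hzr h1.symm
  · exact hu.1.2 rfl

/-- The reachable set from `z` within `U` is `ConnIn`. -/
lemma reach_upgrade (hz : z ∈ U) (h : ReachIn G U z w) :
    ReachIn G {x | x ∈ U ∧ ReachIn G U z x} z w := by
  induction h with
  | refl => exact Relation.ReflTransGen.refl
  | tail hprev hr ih =>
    rename_i bb cc
    exact Relation.ReflTransGen.tail ih
      ⟨⟨hr.1, hprev⟩, ⟨hr.2.1, Relation.ReflTransGen.tail hprev hr⟩, hr.2.2⟩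

lemma connIn_reachSet (hz : z ∈ U) : ConnIn G {x | x ∈ U ∧ ReachIn G U z x} := by
  refine ⟨⟨z, hz, Relation.ReflTransGen.refl⟩, ?_⟩
  rintro a ⟨haU, haR⟩ b ⟨hbU, hbR⟩
  exact reachIn_trans (reachIn_symm (reach_upgrade hz haR)) (reach_upgrade hz hbR)

/-- Bridge: `ReachIn` to reachability in the induced subgraph. -/
lemma reachIn_to_induce (h : ReachIn G S x y) (hx : x ∈ S) (hy : y ∈ S) :
    (G.induce S).Reachable ⟨x, hx⟩ ⟨y, hy⟩ := by
  induction h with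
  | refl => rfl
  | tail hprev hr ih =>
    rename_i bb cc
    have h1 : (G.induce S).Reachable ⟨x, hx⟩ ⟨bb, hr.1⟩ := ih hr.1
    have h2 : (G.induce S).Adj ⟨bb, hr.1⟩ ⟨cc, hy⟩ := hr.2.2
    exact h1.trans h2.reachable

lemma induce_to_reachIn {x y : ↥S} (h : (G.induce S).Reachable x y) :
    ReachIn G S ↑x ↑y := by
  have h' := (reachable_iff_reflTransGen (G := G.induce S) x y).mp h
  exact Relation.ReflTransGen.lift Subtype.val
    (fun a b hab => ⟨a.2, b.2, hab⟩) _ _ h'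

lemma connIn_iff_induce : ConnIn G S ↔ (G.induce S).Connected := by
  constructor
  · rintro ⟨⟨w0, hw0⟩, hconn⟩
    haveI : Nonempty ↥S := ⟨⟨w0, hw0⟩⟩
    exact SimpleGraph.Connected.mk
      (fun a b => reachIn_to_induce (hconn _ a.2 _ b.2) a.2 b.2)
  · intro h
    obtain ⟨w0⟩ := h.nonempty
    refine ⟨⟨w0, w0.2⟩, fun a ha b hb => ?_⟩
    exact induce_to_reachIn (h.preconnected ⟨a, ha⟩ ⟨b, hb⟩)

lemma reachIn_to_induce2 (hs : s ∈ S) (h : ReachIn G (S \ {s}) x y)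
    (hx : x ∈ S \ {s}) (hy : y ∈ S \ {s}) :
    ((G.induce S).induce {w : ↥S | w ≠ ⟨s, hs⟩}).Reachable
      ⟨⟨x, hx.1⟩, fun hc => hx.2 (by simpa using congrArg Subtype.val hc)⟩
      ⟨⟨y, hy.1⟩, fun hc => hy.2 (by simpa using congrArg Subtype.val hc)⟩ := by
  induction h with
  | refl => rfl
  | tail hprev hr ih =>
    rename_i bb cc
    have h1 := ih hr.1
    refine h1.trans (SimpleGraph.Adj.reachable ?_)
    show G.Adj bb cc
    exact hr.2.2

lemma induce2_to_reachIn (hs : s ∈ S)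
    {x y : ↥{w : ↥S | w ≠ ⟨s, hs⟩}}
    (h : ((G.induce S).induce {w : ↥S | w ≠ ⟨s, hs⟩}).Reachable x y) :
    ReachIn G (S \ {s}) (x : ↥S) (y : ↥S) := by
  have h' := (reachable_iff_reflTransGen
    (G := (G.induce S).induce {w : ↥S | w ≠ ⟨s, hs⟩}) x y).mp h
  refine Relation.ReflTransGen.lift (fun w : ↥{w : ↥S | w ≠ ⟨s, hs⟩} => ((w : ↥S) : V))
    (fun a b hab => ?_) _ _ h'
  have hamem : ((a : ↥S) : V) ∈ S \ {s} :=
    ⟨(a : ↥S).2, fun hc => a.2 (Subtype.ext (by simpa using hc))⟩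
  have hbmem : ((b : ↥S) : V) ∈ S \ {s} :=
    ⟨(b : ↥S).2, fun hc => b.2 (Subtype.ext (by simpa using hc))⟩
  exact ⟨hamem, hbmem, hab⟩

/-- Bridge for doubly-induced subgraphs. -/
lemma connIn_iff_induce2 (hs : s ∈ S) :
    ConnIn G (S \ {s}) ↔
      ((G.induce S).induce {w : ↥S | w ≠ ⟨s, hs⟩}).Connected := by
  constructor
  · rintro ⟨⟨w0, hw0⟩, hconn⟩
    haveI : Nonempty ↥{w : ↥S | w ≠ ⟨s, hs⟩} :=
      ⟨⟨⟨w0, hw0.1⟩, fun hc => hw0.2 (by simpa using congrArg Subtype.val hc)⟩⟩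
    refine SimpleGraph.Connected.mk (fun a b => ?_)
    have ha : ((a : ↥S) : V) ∈ S \ {s} :=
      ⟨(a : ↥S).2, fun hc => a.2 (Subtype.ext (by simpa using hc))⟩
    have hb : ((b : ↥S) : V) ∈ S \ {s} :=
      ⟨(b : ↥S).2, fun hc => b.2 (Subtype.ext (by simpa using hc))⟩
    have h := reachIn_to_induce2 hs (hconn _ ha _ hb) ha hb
    exact h
  · intro h
    obtain ⟨w0⟩ := h.nonempty
    have hw0 : ((w0 : ↥S) : V) ∈ S \ {s} :=
      ⟨(w0 : ↥S).2, fun hc => w0.2 (Subtype.ext (by simpa using hc))⟩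
    refine ⟨⟨_, hw0⟩, fun a ha b hb => ?_⟩
    have h' := h.preconnected
      ⟨⟨a, ha.1⟩, fun hc => ha.2 (by simpa using congrArg Subtype.val hc)⟩
      ⟨⟨b, hb.1⟩, fun hc => hb.2 (by simpa using congrArg Subtype.val hc)⟩
    exact induce2_to_reachIn hs h'

end Part2

section Part3
variable {V : Type*} [Fintype V] {G : SimpleGraph V} {S : Set V} {v y z : V}

/-- Any connected induced subgraph without cut vertices of a block graph is a clique. -/
lemma cliqueOfNoCut (hbg : IsBlockGraph G) (h1 : ConnIn G S)
    (h2 : ∀ s ∈ S, ConnIn G (S \ {s})) :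
    ∀ x ∈ S, ∀ y ∈ S, x ≠ y → G.Adj x y := by
  classical
  set F : Set (Set V) := {T | S ⊆ T ∧ ConnIn G T ∧ ∀ t ∈ T, ConnIn G (T \ {t})} with hF
  have hSF : S ∈ F := ⟨subset_rfl, h1, h2⟩
  obtain ⟨T, hTF, hTmax⟩ := Set.exists_max_image F Set.ncard (Set.toFinite F) ⟨S, hSF⟩
  have hblock : IsBlock G T := by
    refine ⟨(connIn_iff_induce).mp hTF.2.1, ?_, ?_⟩
    · rintro ⟨t, ht⟩ ⟨hconn', hncut⟩
      exact hncut ((connIn_iff_induce2 ht).mp (hTF.2.2 t ht))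
    · intro B' hsub hconn hnocut
      have hB'F : B' ∈ F := by
        refine ⟨hTF.1.trans hsub, (connIn_iff_induce).mpr hconn, ?_⟩
        intro t ht
        have hnc := hnocut ⟨t, ht⟩
        rw [IsCutVertex] at hnc
        push_neg at hnc
        exact (connIn_iff_induce2 ht).mpr (hnc hconn)
      exact (Set.eq_of_subset_of_ncard_le hsub (hTmax B' hB'F)).symm
  exact fun x hx y hy hxy => hbg.2 T hblock x (hTF.1 hx) y (hTF.1 hy) hxy

/-- The key property of block graphs: two neighbours of `v` connected avoiding `v`
are adjacent. -/
lemma star (hbg : IsBlockGraph G) (hvy : G.Adj v y) (hvz : G.Adj v z)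
    (hyz : y ≠ z) (h : ReachIn G {x | x ≠ v} y z) : G.Adj y z := by
  classical
  set A : Set V := {x | x ≠ v} with hA
  obtain ⟨f, hf0, hfn, hfs, hfd⟩ := shortestChain h
  set n := dIn G A y z with hn
  have hn1 : 1 ≤ n := dIn_pos_of_ne h hyz
  rcases eq_or_lt_of_le hn1 with h1 | h2
  · have := hfs 0 (by omega)
    rw [hf0] at this
    have h1' : f 1 = z := by rw [← h1] at hfn; exact hfn
    rw [h1'] at this
    exact this.2.2
  · -- n ≥ 2 : use the clique lemma on {v} ∪ chain
    have hinj : ∀ i ≤ n, ∀ j ≤ n, f i = f j → i = j := by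
      intro i hi j hj hij
      have := hfd i hi
      have := hfd j hj
      rw [hij] at *
      omega
    have hfA : ∀ i ≤ n, f i ∈ A := by
      intro i hi
      rcases Nat.eq_zero_or_pos i with h0 | h0
      · subst h0; rw [hf0]; exact hvy.ne'
      · have := hfs (i-1) (by omega)
        have he : i - 1 + 1 = i := by omega
        rw [he] at this
        exact this.2.1
    set SS : Set V := insert v (f '' {i | i ≤ n}) with hSS
    have hmemf : ∀ i ≤ n, f i ∈ SS := fun i hi => Or.inr ⟨i, hi, rfl⟩
    have hvS : v ∈ SS := Or.inl rfl
    have hySS : y ∈ SS := hf0 ▸ hmemf 0 (by omega)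
    have hzSS : z ∈ SS := hfn ▸ hmemf n le_rfl
    -- generic chain-to-v reach within a subset T of SS
    have key : ∀ x ∈ SS, ∀ w ∈ SS, x ≠ w → G.Adj x w := by
      refine cliqueOfNoCut hbg ⟨⟨v, hvS⟩, ?_⟩ ?_
      · -- ConnIn SS : everything reaches v
        have hreachv : ∀ u ∈ SS, ReachIn G SS u v := by
          rintro u (rfl | ⟨i, hi, rfl⟩)
          · exact Relation.ReflTransGen.refl
          · have hr1 : ReachIn G SS (f 0) (f i) :=
              chainReach f (Nat.zero_le i) hi
                (fun k hk hk' => ⟨hmemf k (by omega), hmemf (k+1) (by omega),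
                  (hfs k (by omega)).2.2⟩)
            refine reachIn_trans (reachIn_symm hr1) ?_
            rw [hf0]
            exact reachIn_single ⟨hySS, hvS, hvy.symm⟩
        exact fun a ha b hb =>
          reachIn_trans (hreachv a ha) (reachIn_symm (hreachv b hb))
      · -- no cut vertices
        intro s hsS
        rcases hsS with rfl | ⟨i0, hi0, rfl⟩
        · -- remove v : the chain remains
          refine ⟨⟨y, hySS, hvy.ne'⟩, ?_⟩
          have hmem' : ∀ i ≤ n, f i ∈ SS \ {s} := fun i hi =>
            ⟨hmemf i hi, hfA i hi⟩
          have hreach0 : ∀ u ∈ SS \ {s}, ReachIn G (SS \ {s}) u (f 0) := by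
            rintro u ⟨(rfl | ⟨i, hi, rfl⟩), hne⟩
            · exact absurd rfl hne
            · exact reachIn_symm (chainReach f (Nat.zero_le i) hi
                (fun k hk hk' => ⟨hmem' k (by omega), hmem' (k+1) (by omega),
                  (hfs k (by omega)).2.2⟩))
          exact fun a ha b hb =>
            reachIn_trans (hreach0 a ha) (reachIn_symm (hreach0 b hb))
        · -- remove f i0
          simp only [Set.mem_setOf_eq] at hi0
          have hvne : v ≠ f i0 := (hfA i0 hi0).symm -- hfA : f i0 ≠ v
          refine ⟨⟨v, hvS, hvne⟩, ?_⟩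
          have hreachv : ∀ u ∈ SS \ {f i0}, ReachIn G (SS \ {f i0}) u v := by
            rintro u ⟨(rfl | ⟨j, hj, rfl⟩), hne⟩
            · exact Relation.ReflTransGen.refl
            · simp only [Set.mem_setOf_eq] at hj
              have hji0 : j ≠ i0 := fun hc => hne (hc ▸ rfl)
              rcases lt_or_gt_of_ne hji0 with hlt | hgt
              · -- go down to f 0 = y then to v
                have hstep : ∀ k, 0 ≤ k → k < i0 - 1 →
                    AdjIn G (SS \ {f i0}) (f k) (f (k+1)) := by
                  intro k _ hk
                  refine ⟨⟨hmemf k (by omega), fun hc => ?_⟩,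
                          ⟨hmemf (k+1) (by omega), fun hc => ?_⟩,
                          (hfs k (by omega)).2.2⟩
                  · have := hinj k (by omega) i0 hi0 hc; omega
                  · have := hinj (k+1) (by omega) i0 hi0 hc; omega
                have hr1 : ReachIn G (SS \ {f i0}) (f j) (f 0) := by
                  refine reachIn_symm (chainReach f (Nat.zero_le j) ?_ hstep)
                  omega
                refine reachIn_trans hr1 ?_
                rw [hf0]
                have hy' : y ∈ SS \ {f i0} := by
                  refine ⟨hySS, fun hc => ?_⟩
                  rw [← hf0] at hc
                  have := hinj 0 (by omega) i0 hi0 hc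
                  omega
                exact reachIn_single ⟨hy', ⟨hvS, hvne⟩, hvy.symm⟩
              · -- go up to f n = z then to v
                have hstep : ∀ k, i0 + 1 ≤ k → k < n →
                    AdjIn G (SS \ {f i0}) (f k) (f (k+1)) := by
                  intro k hk hk'
                  refine ⟨⟨hmemf k (by omega), fun hc => ?_⟩,
                          ⟨hmemf (k+1) (by omega), fun hc => ?_⟩,
                          (hfs k (by omega)).2.2⟩
                  · have := hinj k (by omega) i0 hi0 hc; omega
                  · have := hinj (k+1) (by omega) i0 hi0 hc; omega
                have hr1 : ReachIn G (SS \ {f i0}) (f j) (f n) :=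
                  chainReach f (by omega) le_rfl
                    (fun k hk hk' => hstep k (by omega) hk')
                refine reachIn_trans hr1 ?_
                rw [hfn]
                have hz' : z ∈ SS \ {f i0} := by
                  refine ⟨hzSS, fun hc => ?_⟩
                  rw [← hfn] at hc
                  have := hinj n le_rfl i0 hi0 hc
                  omega
                exact reachIn_single ⟨hz', ⟨hvS, hvne⟩, hvz.symm⟩
          exact fun a ha b hb =>
            reachIn_trans (hreachv a ha) (reachIn_symm (hreachv b hb))
    exact key y hySS z hzSS hyz

end Part3

section Part4
variable {V : Type*} [Fintype V] {G : SimpleGraph V} {W : Set V} {r₀ y z q v w : V}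

/-- If `q` is separated from `r₀` by `v`, then `q` is strictly farther from `r₀`. -/
lemma dIn_lt_of_desc (hq : q ∈ Desc G W r₀ v) (hreach : ReachIn G W r₀ q) :
    dIn G W r₀ v < dIn G W r₀ q := by
  classical
  obtain ⟨f, hf0, hfn, hfs, hfd⟩ := shortestChain hreach
  set n := dIn G W r₀ q with hn
  by_cases hv : ∃ i ≤ n, f i = v
  · obtain ⟨i, hi, hiv⟩ := hv
    have hdv : dIn G W r₀ v = i := hiv ▸ hfd i hi
    have hin : i ≠ n := by
      intro hc
      rw [hc, hfn] at hiv
      exact hq.2.1 hiv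
    omega
  · exfalso
    push_neg at hv
    refine hq.2.2 ?_
    have hr : ReachIn G (W \ {v}) (f 0) (f n) :=
      chainReach f (Nat.zero_le n) le_rfl
        (fun k hk hk' => by
          obtain ⟨h1, h2, h3⟩ := hfs k hk'
          exact ⟨⟨h1, hv k (by omega)⟩, ⟨h2, hv (k+1) (by omega)⟩, h3⟩)
    rwa [hf0, hfn] at hr

/-- Claim P: a vertex of `Desc y` not adjacent to `y` lies in the descendant set of
some neighbour `q` of `y` inside `Desc y`. -/
lemma claimP (hbg : IsBlockGraph G) (hconn : ConnIn G W) (hr0 : r₀ ∈ W) (hyW : y ∈ W) :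
    ∀ k, ∀ z ∈ Desc G W r₀ y, ¬ G.Adj y z → dIn G W y z = k →
      ∃ q, q ∈ Desc G W r₀ y ∧ G.Adj y q ∧ z ∈ Desc G W r₀ q := by
  classical
  intro k
  induction k using Nat.strong_induction_on with
  | _ k ih =>
    intro z hz hnadj hdk
    have hzW : z ∈ W := hz.1
    have hzy : z ≠ y := hz.2.1
    have hreach : ReachIn G W y z := hconn.2 y hyW z hzW
    obtain ⟨f, hf0, hfn, hfs, hfd⟩ := shortestChain hreach
    rw [hdk] at hfn hfs hfd
    -- k ≥ 2
    have hk1 : 1 ≤ k := by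
      rw [← hdk]; exact dIn_pos_of_ne hreach (Ne.symm hzy)
    have hk2 : 2 ≤ k := by
      rcases eq_or_lt_of_le hk1 with h1 | h2
      · exfalso
        have := hfs 0 (by omega)
        rw [hf0] at this
        have h1' : f 1 = z := by rw [h1]; exact hfn
        rw [h1'] at this
        exact hnadj this.2.2
      · omega
    -- all interior chain vertices are in Desc y
    have hne_y : ∀ i, 1 ≤ i → i ≤ k → f i ≠ y := by
      intro i h1 h2 hc
      have := hfd i h2
      rw [hc, dIn_self] at this
      omega
    have hstays : ∀ m, ∀ j, j + m = k → 1 ≤ j → f j ∈ Desc G W r₀ y := by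
      intro m
      induction m with
      | zero =>
        intro j hj _
        have : j = k := by omega
        rw [this, hfn]; exact hz
      | succ m ihm =>
        intro j hj h1
        have hj1 : f (j+1) ∈ Desc G W r₀ y := ihm (j+1) (by omega) (by omega)
        have hstep := hfs j (by omega)
        exact desc_closure hj1 hstep.1 (hne_y j h1 (by omega)) hstep.2.2.symm
    -- base vs inductive case on k
    rcases eq_or_lt_of_le hk2 with hbase | hstep
    · -- k = 2 : q := f 1
      set m := f 1 with hm
      have hmDesc : m ∈ Desc G W r₀ y := hstays 1 1 (by omega) le_rfl
      have hadjym : G.Adj y m := by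
        have := hfs 0 (by omega); rw [hf0] at this; exact this.2.2
      have hadjmz : G.Adj m z := by
        have := hfs 1 (by omega)
        have h2' : f 2 = z := by rw [← hbase] at hfn; exact hfn
        rw [h2'] at this
        exact this.2.2
      refine ⟨m, hmDesc, hadjym, hzW, ?_, ?_⟩
      · exact fun hc => hnadj (hc ▸ hadjym)
      · -- ¬ ReachIn (W \ {m}) r₀ z
        intro hre
        obtain ⟨ℓ, hℓ⟩ := reachIn_iff_reachN.mp hre
        obtain ⟨g, hg0, hgℓ, hgs⟩ := toChain hℓ
        by_cases hy' : ∃ i ≤ ℓ, g i = y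
        · -- suffix gives a path y ⇝ z avoiding m, so star applies
          obtain ⟨i, hiℓ, hiy⟩ := hy'
          have hsuf : ReachIn G (W \ {m}) (g i) (g ℓ) :=
            chainReach g hiℓ le_rfl (fun j hj hj' => hgs j hj')
          rw [hiy, hgℓ] at hsuf
          have hsuf' : ReachIn G {x | x ≠ m} y z :=
            reachIn_mono (fun u hu => hu.2) hsuf
          exact hnadj (star hbg hadjym.symm hadjmz (Ne.symm hzy) hsuf')
        · -- the chain avoids y entirely: contradicts z ∈ Desc y
          push_neg at hy'
          refine hz.2.2 ?_
          have : ReachIn G (W \ {y}) (g 0) (g ℓ) :=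
            chainReach g (Nat.zero_le ℓ) le_rfl
              (fun j _ hj' => by
                obtain ⟨⟨h1, _⟩, ⟨h2, _⟩, h3⟩ := hgs j hj'
                exact ⟨⟨h1, hy' j (by omega)⟩, ⟨h2, hy' (j+1) (by omega)⟩, h3⟩)
          rwa [hg0, hgℓ] at this
    · -- k ≥ 3 : use IH on w := f (k-1)
      set w := f (k-1) with hw
      have hwDesc : w ∈ Desc G W r₀ y := hstays 1 (k-1) (by omega) (by omega)
      have hdw : dIn G W y w = k - 1 := hfd (k-1) (by omega)
      have hnadjw : ¬ G.Adj y w := by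
        intro hc
        have : dIn G W y w ≤ 1 := dIn_le ⟨w, ⟨hyW, hwDesc.1, hc⟩, rfl⟩
        omega
      obtain ⟨q, hqDesc, hqadj, hwq⟩ := ih (k-1) (by omega) w hwDesc hnadjw hdw
      refine ⟨q, hqDesc, hqadj, ?_⟩
      have hzq : z ≠ q := fun hc => hnadj (hc ▸ hqadj)
      have hadjwz : G.Adj w z := by
        have := hfs (k-1) (by omega)
        have he : k - 1 + 1 = k := by omega
        rw [he, hfn] at this
        exact this.2.2
      exact desc_closure hwq hzW hzq hadjwz

end Part4

section Part5
variable {V : Type*} [Fintype V] {G : SimpleGraph V}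

/-- Main lemma: every connected "induced subgraph" of a block graph on at least 3
vertices has an isolating set of size at most a third of its order. -/
lemma mainA (hbg : IsBlockGraph G) :
    ∀ N : ℕ, ∀ W : Set V, W.ncard ≤ N → ConnIn G W → 3 ≤ W.ncard →
      ∃ D ⊆ W, IsolIn G W D ∧ 3 * D.ncard ≤ W.ncard := by
  classical
  intro N
  induction N with
  | zero => intro W hWN _ hW3; omega
  | succ N ihN =>
    intro W hWN hconn hW3
    obtain ⟨r₀, hr0⟩ := hconn.1
    set cand : Set V := {v | v ∈ W ∧ 3 ≤ (insert v (Desc G W r₀ v)).ncard} with hcand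
    have hdesc_r0 : Desc G W r₀ r₀ = W \ {r₀} := by
      apply Set.Subset.antisymm
      · intro u hu; exact ⟨hu.1, hu.2.1⟩
      · exact desc_of_root
    have hr0cand : r₀ ∈ cand := by
      refine ⟨hr0, ?_⟩
      rw [hdesc_r0, Set.insert_diff_singleton, Set.insert_eq_self.mpr hr0]
      exact hW3
    obtain ⟨y, hycand, hymax⟩ := Set.exists_max_image cand (fun v => dIn G W r₀ v)
      (Set.toFinite cand) ⟨r₀, hr0cand⟩
    have hyW : y ∈ W := hycand.1
    set DS : Set V := Desc G W r₀ y with hDS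
    set P : Set V := insert y DS with hP
    set W'' : Set V := W \ P with hW''
    have hPW : P ⊆ W := by
      rintro u (rfl | hu)
      · exact hyW
      · exact hu.1
    have hP3 : 3 ≤ P.ncard := hycand.2
    have hcount : P.ncard + W''.ncard = W.ncard := by
      have h1 : W''.ncard = W.ncard - P.ncard := Set.ncard_diff hPW (Set.toFinite P)
      have h2 : P.ncard ≤ W.ncard := Set.ncard_le_ncard hPW (Set.toFinite W)
      omega
    -- pendant structure for uncovered vertices of DS
    have hpend : ∀ z ∈ DS, ¬ G.Adj y z →
        ∃ q, G.Adj y q ∧ ∀ w ∈ W, G.Adj z w → w = q := by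
      intro z hzDS hnadj
      obtain ⟨q, hqDS, hqadj, hzq⟩ :=
        claimP hbg hconn hr0 hyW (dIn G W y z) z hzDS hnadj rfl
      have hqncand : q ∉ cand := by
        intro hc
        have h1 := hymax q hc
        have h2 := dIn_lt_of_desc hqDS (hconn.2 r₀ hr0 q hqDS.1)
        omega
      have hq2 : (insert q (Desc G W r₀ q)).ncard ≤ 2 := by
        by_contra hc
        exact hqncand ⟨hqDS.1, by omega⟩
      have hqd1 : (Desc G W r₀ q).ncard ≤ 1 := by
        have : (insert q (Desc G W r₀ q)).ncard = (Desc G W r₀ q).ncard + 1 :=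
          Set.ncard_insert_of_notMem not_mem_desc_self (Set.toFinite _)
        omega
      have hsingle : Desc G W r₀ q = {z} := by
        apply Set.Subset.antisymm
        · intro u hu
          have h2 : ({u, z} : Set V).ncard ≤ 1 :=
            le_trans (Set.ncard_le_ncard (by
              rintro t (rfl | rfl); exacts [hu, hzq]) (Set.toFinite _)) hqd1
          have : u = z := by
            by_contra hne
            rw [Set.ncard_pair hne] at h2
            omega
          exact this ▸ rfl
        · rintro u rfl; exact hzq
      refine ⟨q, hqadj, fun w hwW hadj => ?_⟩
      by_contra hwq
      have : w ∈ Desc G W r₀ q := desc_closure hzq hwW hwq hadj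
      rw [hsingle] at this
      rw [this] at hadj
      exact G.irrefl hadj
    -- membership trichotomy
    have htri : ∀ a ∈ W, a = y ∨ a ∈ DS ∨ a ∈ W'' := by
      intro a haW
      by_cases h1 : a = y
      · exact Or.inl h1
      by_cases h2 : a ∈ DS
      · exact Or.inr (Or.inl h2)
      exact Or.inr (Or.inr ⟨haW, fun hc => hc.elim h1 h2⟩)
    have hW''reach : ∀ a ∈ W'', ReachIn G (W \ {y}) r₀ a := by
      rintro a ⟨haW, haP⟩
      have h1 : a ≠ y := fun hc => haP (Or.inl hc)
      have h2 : a ∉ DS := fun hc => haP (Or.inr hc)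
      by_contra hre
      exact h2 ⟨haW, h1, hre⟩
    -- if y = r₀ then W'' is empty
    have hy_r0_empty : y = r₀ → W'' = ∅ := by
      intro hyr
      subst hyr
      ext u
      simp only [Set.mem_empty_iff_false, iff_false]
      rintro ⟨huW, huP⟩
      rcases htri u huW with h1 | h2 | h3
      · exact huP (Or.inl h1)
      · exact huP (Or.inr h2)
      · have := hW''reach u h3
        rcases this.cases_head with hh | ⟨c, hc, _⟩
        · exact huP (Or.inl hh.symm)
        · exact hc.1.2 rfl
    -- helper : uncovered vertices of DS are only adjacent to their (covered) support
    have hDescSafe : ∀ D₀ : Set V, y ∈ D₀ →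
        ∀ u ∈ DS, u ∉ closedNbhd G D₀ → ∀ w ∈ W, w ∉ closedNbhd G D₀ →
          ¬ G.Adj u w := by
      intro D₀ hyD u huDS hu w hwW hw hadj
      have hnady : ¬ G.Adj y u := fun hc => hu (mem_closedNbhd_adj hyD hc)
      obtain ⟨q, hqadj, hqpend⟩ := hpend u huDS hnady
      have : w = q := hqpend w hwW hadj
      exact hw (this ▸ mem_closedNbhd_adj hyD hqadj)
    by_cases hWcase : 3 ≤ W''.ncard
    · -- recursive case
      have hyr0 : y ≠ r₀ := by
        intro hc
        rw [hy_r0_empty hc, Set.ncard_empty] at hWcase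
        omega
      have hr0W'' : r₀ ∈ W \ {y} := ⟨hr0, Ne.symm hyr0⟩
      have hW''eq : W'' = {x | x ∈ W \ {y} ∧ ReachIn G (W \ {y}) r₀ x} := by
        apply Set.Subset.antisymm
        · intro a ha
          exact ⟨⟨ha.1, fun hc => ha.2 (Or.inl hc)⟩, hW''reach a ha⟩
        · rintro a ⟨⟨haW, hay⟩, hre⟩
          refine ⟨haW, ?_⟩
          rintro (hc | hc)
          · exact hay hc
          · exact hc.2.2 hre
      have hconn'' : ConnIn G W'' := by
        rw [hW''eq]
        exact connIn_reachSet hr0W''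
      obtain ⟨D'', hD''sub, hD''iso, hD''count⟩ :=
        ihN W'' (by omega) hconn'' hWcase
      refine ⟨insert y D'', ?_, ?_, ?_⟩
      · exact Set.insert_subset hyW (hD''sub.trans (Set.diff_subset))
      · -- IsolIn
        intro a haW b hbW ha hb hadj
        have hysafe : ∀ u, u ∉ closedNbhd G (insert y D'') → u ≠ y := by
          intro u hu hc
          exact hu (mem_closedNbhd_self (hc ▸ Or.inl rfl))
        have hmono := closedNbhd_mono (G := G) (Set.subset_insert y D'')
        rcases htri a haW with h1 | h2 | h3
        · exact (hysafe a ha) h1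
        · exact hDescSafe (insert y D'') (Or.inl rfl) a h2 ha b hbW hb hadj
        · rcases htri b hbW with g1 | g2 | g3
          · exact (hysafe b hb) g1
          · exact hDescSafe (insert y D'') (Or.inl rfl) b g2 hb a haW ha hadj.symm
          · exact hD''iso a h3 b g3 (fun hc => ha (hmono hc)) (fun hc => hb (hmono hc)) hadj
      · -- counting
        have h1 : (insert y D'').ncard ≤ D''.ncard + 1 :=
          Set.ncard_insert_le y D''
        omega
    · -- endgame : W'' has at most 2 vertices
      push_neg at hWcase
      refine ⟨{y}, by simpa using hyW, ?_, ?_⟩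
      · intro a haW b hbW ha hb hadj
        have hysafe : ∀ u, u ∉ closedNbhd G ({y} : Set V) → u ≠ y := by
          intro u hu hc
          exact hu (mem_closedNbhd_self (hc ▸ rfl))
        rcases htri a haW with h1 | h2 | h3
        · exact (hysafe a ha) h1
        · exact hDescSafe {y} rfl a h2 ha b hbW hb hadj
        · rcases htri b hbW with g1 | g2 | g3
          · exact (hysafe b hb) g1
          · exact hDescSafe {y} rfl b g2 hb a haW ha hadj.symm
          · -- both in W'' : W'' = {a, b} and some vertex of W'' is adjacent to y
            have hab : a ≠ b := hadj.ne
            have habW'' : ({a, b} : Set V) ⊆ W'' := by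
              rintro t (rfl | rfl); exacts [h3, g3]
            have hW''ab : W'' = {a, b} := by
              refine (Set.eq_of_subset_of_ncard_le habW'' ?_ (Set.toFinite _)).symm
              rw [Set.ncard_pair hab]
              omega
            have hyr0 : y ≠ r₀ := by
              intro hc
              have := hy_r0_empty hc
              rw [this] at hW''ab
              have ha' : a ∈ (∅ : Set V) := by rw [hW''ab]; exact Or.inl rfl
              exact ha'
            -- find a neighbour of y inside W''
            have hreachy : ReachIn G W r₀ y := hconn.2 r₀ hr0 y hyW
            obtain ⟨f, hf0, hfn, hfs, hfd⟩ := shortestChain hreachy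
            set n := dIn G W r₀ y with hn
            have hn1 : 1 ≤ n := dIn_pos_of_ne hreachy (Ne.symm hyr0)
            have hfy : ∀ i < n, f i ≠ y := by
              intro i hi hc
              have h1 := hfd i (le_of_lt hi)
              rw [hc] at h1
              have h2 := hfd n le_rfl
              rw [hfn] at h2
              omega
            set w₀ := f (n-1) with hw₀
            have hadjw : G.Adj w₀ y := by
              have := hfs (n-1) (by omega)
              have he : n - 1 + 1 = n := by omega
              rw [he, hfn] at this
              exact this.2.2
            have hw₀W'' : w₀ ∈ W'' := by
              have hre : ReachIn G (W \ {y}) (f 0) (f (n-1)) :=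
                chainReach (n := n-1) f (Nat.zero_le (n-1)) le_rfl
                  (fun k hk hk' => by
                    obtain ⟨h1', h2', h3'⟩ := hfs k (by omega)
                    exact ⟨⟨h1', hfy k (by omega)⟩, ⟨h2', hfy (k+1) (by omega)⟩, h3'⟩)
              rw [hf0] at hre
              refine ⟨(hfs (n-1) (by omega)).1, ?_⟩
              rintro (hc | hc)
              · exact hfy (n-1) (by omega) hc
              · exact hc.2.2 hre
            -- w₀ is covered, but both a and b are uncovered
            rw [hW''ab] at hw₀W''
            have hcov : w₀ ∈ closedNbhd G ({y} : Set V) :=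
              mem_closedNbhd_adj rfl hadjw.symm
            rcases hw₀W'' with rfl | rfl
            · exact ha hcov
            · exact hb hcov
      · have h1 : ({y} : Set V).ncard = 1 := Set.ncard_singleton y
        omega

end Part5

section Part6
variable {V : Type*} [Fintype V] {G : SimpleGraph V}

lemma reachIn_univ_of_reachable {a b : V} (h : G.Reachable a b) :
    ReachIn G (Set.univ : Set V) a b := by
  have h' := (reachable_iff_reflTransGen (G := G) a b).mp h
  exact Relation.ReflTransGen.mono (fun x y hxy => ⟨trivial, trivial, hxy⟩) _ _ h'

/-- From a reach crossing the boundary of `C`, extract an exiting edge. -/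
lemma exitStep {C : Set V} {a b : V} (h : ReachIn G (Set.univ : Set V) a b)
    (ha : a ∈ C) (hb : b ∉ C) : ∃ w x, w ∈ C ∧ x ∉ C ∧ G.Adj w x := by
  classical
  induction h with
  | refl => exact absurd ha hb
  | tail hprev hr ih =>
    rename_i u c
    by_cases hu : u ∈ C
    · exact ⟨u, c, hu, hb, hr.2.2⟩
    · exact ih hu

/-- Assembly over the components of the complement of the end-block. -/
lemma asm (hbg : IsBlockGraph G) {c₀ : V} :
    ∀ N : ℕ, ∀ U : Set V, U.ncard ≤ N → c₀ ∉ U →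
      (∀ z ∈ U, ∀ w, G.Adj z w → w ∈ U ∨ w = c₀) →
      ∃ D ⊆ U, 3 * D.ncard ≤ U.ncard ∧
        ∀ a ∈ U, ∀ b ∈ U, a ∉ closedNbhd G (insert c₀ D) →
          b ∉ closedNbhd G (insert c₀ D) → ¬ G.Adj a b := by
  classical
  intro N
  induction N with
  | zero =>
    intro U hUN _ _
    have hU0 : U.ncard = 0 := by omega
    have hUe : U = ∅ := (Set.ncard_eq_zero (Set.toFinite U)).mp hU0
    exact ⟨∅, by simp, by simp, by simp [hUe]⟩
  | succ N ihN =>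
    intro U hUN hc₀U hU1
    rcases Set.eq_empty_or_nonempty U with rfl | ⟨z₀, hz₀⟩
    · exact ⟨∅, by simp, by simp, by simp⟩
    set C : Set V := {x | x ∈ U ∧ ReachIn G U z₀ x} with hC
    have hz₀C : z₀ ∈ C := ⟨hz₀, Relation.ReflTransGen.refl⟩
    have hCU : C ⊆ U := fun x hx => hx.1
    have hconnC : ConnIn G C := connIn_reachSet hz₀
    have hclosure : ∀ w ∈ C, ∀ x ∈ U, G.Adj w x → x ∈ C := by
      intro w hw x hx hadj
      exact ⟨hx, Relation.ReflTransGen.tail hw.2 ⟨hw.1, hx, hadj⟩⟩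
    have hC1 : 1 ≤ C.ncard := by
      rw [Nat.one_le_iff_ne_zero]
      intro hc
      rw [Set.ncard_eq_zero (Set.toFinite C)] at hc
      rw [hc] at hz₀C
      exact hz₀C
    have hUC : (U \ C).ncard = U.ncard - C.ncard := Set.ncard_diff hCU (Set.toFinite C)
    have hCle : C.ncard ≤ U.ncard := Set.ncard_le_ncard hCU (Set.toFinite U)
    obtain ⟨D', hD'sub, hD'count, hD'cond⟩ :=
      ihN (U \ C) (by omega) (fun hc => hc₀U hc.1)
        (by
          intro z hz w hadj
          rcases hU1 z hz.1 w hadj with hw | hw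
          · by_cases hwC : w ∈ C
            · exact absurd (hclosure w hwC z hz.1 hadj.symm) hz.2
            · exact Or.inl ⟨hw, hwC⟩
          · exact Or.inr hw)
    by_cases hCcase : 3 ≤ C.ncard
    · obtain ⟨DC, hDCsub, hDCiso, hDCcount⟩ :=
        mainA hbg C.ncard C le_rfl hconnC hCcase
      refine ⟨DC ∪ D', Set.union_subset (hDCsub.trans hCU) (hD'sub.trans Set.diff_subset),
        ?_, ?_⟩
      · have hdisj : Disjoint DC D' :=
          Set.disjoint_of_subset hDCsub hD'sub Set.disjoint_sdiff_right
        rw [Set.ncard_union_eq hdisj (Set.toFinite DC) (Set.toFinite D')]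
        omega
      · intro a ha b hb hna hnb hadj
        have hmonoC : closedNbhd G DC ⊆ closedNbhd G (insert c₀ (DC ∪ D')) :=
          closedNbhd_mono (fun x hx => Or.inr (Or.inl hx))
        have hmonoD' : closedNbhd G (insert c₀ D') ⊆ closedNbhd G (insert c₀ (DC ∪ D')) :=
          closedNbhd_mono (by
            rintro x (rfl | hx)
            · exact Or.inl rfl
            · exact Or.inr (Or.inr hx))
        by_cases haC : a ∈ C
        · by_cases hbC : b ∈ C
          · exact hDCiso a haC b hbC (fun hc => hna (hmonoC hc)) (fun hc => hnb (hmonoC hc)) hadj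
          · exact hbC (hclosure a haC b hb hadj)
        · by_cases hbC : b ∈ C
          · exact haC (hclosure b hbC a ha hadj.symm)
          · exact hD'cond a ⟨ha, haC⟩ b ⟨hb, hbC⟩
              (fun hc => hna (hmonoD' hc)) (fun hc => hnb (hmonoD' hc)) hadj
    · -- small component : no extra cost
      refine ⟨D', hD'sub.trans Set.diff_subset, by omega, ?_⟩
      intro a ha b hb hna hnb hadj
      by_cases haC : a ∈ C
      · by_cases hbC : b ∈ C
        · -- C = {a, b}; find a vertex of C adjacent to c₀
          have hab : a ≠ b := hadj.ne
          have hCeq : C = {a, b} := by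
            refine (Set.eq_of_subset_of_ncard_le
              (by rintro t (rfl | rfl); exacts [haC, hbC]) ?_ (Set.toFinite C)).symm
            rw [Set.ncard_pair hab]
            omega
          have hreach : ReachIn G (Set.univ : Set V) z₀ c₀ :=
            reachIn_univ_of_reachable (hbg.1.preconnected z₀ c₀)
          obtain ⟨w, x, hwC, hxC, hwx⟩ := exitStep hreach hz₀C (fun hc => hc₀U hc.1)
          have hxc₀ : x = c₀ := by
            rcases hU1 w (hCU hwC) x hwx with hx | hx
            · exact absurd (hclosure w hwC x hx hwx) hxC
            · exact hx
          have hwcov : w ∈ closedNbhd G (insert c₀ D') :=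
            mem_closedNbhd_adj (Or.inl rfl) (hxc₀ ▸ hwx.symm)
          rw [hCeq] at hwC
          rcases hwC with rfl | rfl
          · exact hna hwcov
          · exact hnb hwcov
        · exact hbC (hclosure a haC b hb hadj)
      · by_cases hbC : b ∈ C
        · exact haC (hclosure b hbC a ha hadj.symm)
        · exact hD'cond a ⟨ha, haC⟩ b ⟨hb, hbC⟩ hna hnb hadj

end Part6

theorem stmt6 {V : Type*} [Fintype V] (G : SimpleGraph V)
    (hbg : IsBlockGraph G) (hne : G ≠ ⊤)
    (hiso : 3 * isolNum G = Fintype.card V) :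
    ∀ B : Set V, IsEndBlock G B → B.ncard ≤ 3 := by
  classical
  intro B hB
  by_contra hcard
  push_neg at hcard
  have hB4 : 4 ≤ B.ncard := hcard
  have hclique : ∀ x ∈ B, ∀ y ∈ B, x ≠ y → G.Adj x y := hbg.2 B hB.1
  have hGconn : G.Connected := hbg.1
  have hBne : B.Nonempty := by
    rw [← Set.ncard_pos (Set.toFinite B)] at *
    omega
  -- Step 1 : every boundary vertex of B is a cut vertex of G.
  have hboundary_cut : ∀ x ∈ B, ∀ y, y ∉ B → G.Adj x y → IsCutVertex G x := by
    intro x hxB y hyB hadj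
    refine ⟨hGconn, ?_⟩
    intro hconn'
    -- y is adjacent to every vertex of B
    have hyadjB : ∀ z ∈ B, G.Adj y z := by
      intro z hzB
      by_cases hzx : z = x
      · exact hzx ▸ hadj.symm
      · have hcx : ConnIn G {w | w ≠ x} := connIn_iff_induce.mpr hconn'
        have hyx : y ≠ x := hadj.ne'
        have hre : ReachIn G {w | w ≠ x} y z := hcx.2 y hyx z hzx
        exact star hbg hadj (hclique x hxB z hzB (Ne.symm hzx)) (fun hc => hyB (hc ▸ hzB)) hre
    -- B ∪ {y} is connected without cut vertices, contradicting maximality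
    set B' : Set V := insert y B with hB'
    have hyB' : y ∈ B' := Or.inl rfl
    have hhub : ∀ a ∈ B', a ≠ y → G.Adj a y := by
      rintro a (rfl | haB)
      · intro h; exact absurd rfl h
      · intro _; exact (hyadjB a haB).symm
    have hconnB' : ConnIn G B' := by
      refine ⟨⟨y, hyB'⟩, ?_⟩
      have hr : ∀ a ∈ B', ReachIn G B' a y := by
        intro a haB'
        by_cases hay : a = y
        · exact hay ▸ Relation.ReflTransGen.refl
        · exact reachIn_single ⟨haB', hyB', hhub a haB' hay⟩
      exact fun a ha b hb => reachIn_trans (hr a ha) (reachIn_symm (hr b hb))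
    have hnocut : ∀ v : ↥B', ¬ IsCutVertex (G.induce B') v := by
      rintro ⟨v, hvB'⟩ ⟨_, hnc⟩
      refine hnc ((connIn_iff_induce2 hvB').mp ?_)
      rcases hvB' with rfl | hvB
      · -- removing y : B remains (a clique)
        have heq : B' \ {v} = B := by
          rw [hB', Set.insert_diff_of_mem _ (Set.mem_singleton v)]
          exact Set.diff_singleton_eq_self hyB
        rw [heq]
        refine ⟨hBne, fun a ha b hb => ?_⟩
        by_cases hab : a = b
        · exact hab ▸ Relation.ReflTransGen.refl
        · exact reachIn_single ⟨ha, hb, hclique a ha b hb hab⟩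
      · -- removing a vertex of B : y remains a hub
        have hyv : y ≠ v := fun hc => hyB (hc ▸ hvB)
        have hymem : y ∈ B' \ {v} := ⟨hyB', hyv⟩
        refine ⟨⟨y, hymem⟩, ?_⟩
        have hr : ∀ a ∈ B' \ {v}, ReachIn G (B' \ {v}) a y := by
          rintro a ⟨haB', hav⟩
          by_cases hay : a = y
          · exact hay ▸ Relation.ReflTransGen.refl
          · exact reachIn_single ⟨⟨haB', hav⟩, hymem, hhub a haB' hay⟩
        exact fun a ha b hb => reachIn_trans (hr a ha) (reachIn_symm (hr b hb))
    have := hB.1.2.2 B' (Set.subset_insert y B) (connIn_iff_induce.mp hconnB') hnocut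
    exact hyB (this ▸ hyB')
  -- Step 2 : case split on whether B has a boundary vertex at all.
  by_cases hbd : ∃ x ∈ B, ∃ y, y ∉ B ∧ G.Adj x y
  · -- Step 3 : the boundary vertex is unique; apply the assembly lemma.
    obtain ⟨c₀, hc₀B, y₀, hy₀B, hc₀adj⟩ := hbd
    have hc₀cut : IsCutVertex G c₀ := hboundary_cut c₀ hc₀B y₀ hy₀B hc₀adj
    have huniq : ∀ w ∈ B, ∀ u, u ∉ B → G.Adj w u → w = c₀ := by
      intro w hwB u huB hadj
      have hwcut : IsCutVertex G w := hboundary_cut w hwB u huB hadj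
      exact hB.2 ⟨hwB, hwcut⟩ ⟨hc₀B, hc₀cut⟩
    set U : Set V := Set.univ \ B with hU
    have hc₀U : c₀ ∉ U := fun hc => hc.2 hc₀B
    obtain ⟨Da, hDaSub, hDaCount, hDaCond⟩ :=
      asm hbg U.ncard U le_rfl hc₀U
        (by
          intro z hz w hadj
          by_cases hwB : w ∈ B
          · exact Or.inr (huniq w hwB z hz.2 hadj.symm)
          · exact Or.inl ⟨trivial, hwB⟩)
    set Dtot : Set V := insert c₀ Da with hDtot
    have hBcov : ∀ a ∈ B, a ∈ closedNbhd G Dtot := by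
      intro a haB
      by_cases hac : a = c₀
      · exact mem_closedNbhd_self (hac ▸ Or.inl rfl)
      · exact mem_closedNbhd_adj (Or.inl rfl) (hclique c₀ hc₀B a haB (Ne.symm hac))
    have hiso' : IsIsolating G Dtot := by
      intro a b hna hnb hadj
      have haU : a ∈ U := by
        by_contra hc
        have haB : a ∈ B := by
          by_contra hc'
          exact hc ⟨trivial, hc'⟩
        exact hna (hBcov a haB)
      have hbU : b ∈ U := by
        by_contra hc
        have hbB : b ∈ B := by
          by_contra hc'
          exact hc ⟨trivial, hc'⟩
        exact hnb (hBcov b hbB)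
      exact hDaCond a haU b hbU hna hnb hadj
    -- counting
    have hn : (Set.univ : Set V).ncard = Fintype.card V := by
      rw [Set.ncard_univ, Nat.card_eq_fintype_card]
    have hBle : B.ncard ≤ (Set.univ : Set V).ncard :=
      Set.ncard_le_ncard (Set.subset_univ B) (Set.toFinite _)
    have hUn : U.ncard = (Set.univ : Set V).ncard - B.ncard :=
      Set.ncard_diff (Set.subset_univ B) (Set.toFinite B)
    have hDtotle : Dtot.ncard ≤ Da.ncard + 1 := Set.ncard_insert_le c₀ Da
    have hisol_le : isolNum G ≤ Dtot.ncard := Nat.sInf_le ⟨Dtot, hiso', rfl⟩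
    omega
  · -- no boundary vertex : B = univ and G is complete, contradiction
    push_neg at hbd
    have hBuniv : B = Set.univ := by
      apply Set.eq_univ_of_forall
      intro v
      by_contra hvB
      obtain ⟨b₀, hb₀⟩ := hBne
      have hre : ReachIn G (Set.univ : Set V) b₀ v :=
        reachIn_univ_of_reachable (hGconn.preconnected b₀ v)
      obtain ⟨w, x, hwB, hxB, hwx⟩ := exitStep hre hb₀ hvB
      exact hbd w hwB x hxB hwx
    apply hne
    ext v w
    simp only [SimpleGraph.top_adj]
    constructor
    · exact fun h => h.ne
    · intro hvw
      exact hclique v (hBuniv ▸ Set.mem_univ v) w (hBuniv ▸ Set.mem_univ w) hvw
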